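/- Let X be an additive commutative topological group whose topology is T₁ and locally convex (i.e., has a basis of open sets that are convex in the monoid sense). Then every singleton {x} is a convex subset of X, and every element x ≠ 0 has infinite order, i.e., n•x ≠ 0 for every positive integer n. -/

import Mathlib

/-- A subset `A` of an additive commutative monoid is convex (in the monoid sense) if
whenever `m • x = m₁ • x₁ + ⋯ + mₙ • xₙ` with `xᵢ ∈ A`, positive integers `mᵢ`
and `m = m₁ + ⋯ + mₙ`, then `x ∈ A`. -/
def MConvex {X : Type*} [AddCommMonoid X] (A : Set X) : Prop :=
  ∀ (n : ℕ), 0 < n → ∀ (x : X) (xs : Fin n → X) (ms : Fin n → ℕ),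
    (∀ i, xs i ∈ A) → (∀ i, 0 < ms i) →
    (∑ i, ms i) • x = ∑ i, ms i • xs i → x ∈ A

/-- A topological additive commutative monoid is locally convex if its topology has a basis
consisting of convex sets. -/
def LocallyMConvex (X : Type*) [AddCommMonoid X] [TopologicalSpace X] : Prop :=
  ∃ B : Set (Set X), TopologicalSpace.IsTopologicalBasis B ∧ ∀ U ∈ B, MConvex U

theorem singletons_convex_and_no_finite_order
    {X : Type*} [AddCommGroup X] [TopologicalSpace X] [IsTopologicalAddGroup X]
    [T1Space X] (hlc : LocallyMConvex X) :
    (∀ x : X, MConvex ({x} : Set X)) ∧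
      (∀ x : X, x ≠ 0 → ∀ n : ℕ, 0 < n → n • x ≠ 0) := by
  obtain ⟨B, hB, hBconv⟩ := hlc
  have key : ∀ x : X, MConvex ({x} : Set X) := by
    intro x
    -- {x} is the intersection of basis sets containing x
    have hset : ({x} : Set X) = ⋂₀ {U | U ∈ B ∧ x ∈ U} := by
      apply Set.eq_of_subset_of_subset
      · rintro y rfl U ⟨_, hxU⟩
        exact hxU
      · intro y hy
        by_contra hne
        have hne' : x ≠ y := fun h => hne (h ▸ rfl)
        have : x ∈ ({y}ᶜ : Set X) := hne'
        obtain ⟨U, hUB, hxU, hUsub⟩ :=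
          hB.exists_subset_of_mem_open this (isOpen_compl_singleton)
        exact hUsub (hy U ⟨hUB, hxU⟩) rfl
    rw [hset]
    intro n hn y xs ms hxs hms hsum
    intro U hU
    simp only [Set.mem_setOf_eq] at hU
    rcases hU with ⟨hUB, hxU⟩
    exact hBconv U hUB n hn y xs ms (fun i => hxs i U ⟨hUB, hxU⟩) hms hsum
  refine ⟨key, fun x hx n hn hnx => ?_⟩
  have : x ∈ ({0} : Set X) := by
    apply key 0 1 one_pos x (fun _ => 0) (fun _ => n)
    · intro i; rfl
    · intro i; exact hn
    · simp [hnx]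
  exact hx this
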